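/- Let n, k ∈ ℕ with k < n, let H ⊆ ℝ with |H| ≥ n+1, let ω = (ω₁, …, ω_n) : H → ℝⁿ be an n-dimensional positive Chebyshev system over H such that ω_{⟨k⟩} and ω_{⟨k+1⟩} are k- and (k+1)-dimensional positive Chebyshev systems over H, and let f : H → ℝ. If f is ω-convex on H, then for each k-tuple x₁ < … < x_k in H, the function x ↦ [x₁, …, x_k, x; f]_{ω_{⟨k+1⟩}} is convex on H ∖ {x₁, …, x_k} with respect to the (n−k)-dimensional positive Chebyshev system formed by the functions x ↦ [x₁, …, x_k, x; ω_j]_{ω_{⟨k+1⟩}}, j ∈ {k+1, …, n}. -/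

import Mathlib

/-- `Φ_ω(x₁,…,x_m) = det(ω_i(x_j))`. -/
noncomputable def Phi {m : ℕ} (ω : Fin m → ℝ → ℝ) (x : Fin m → ℝ) : ℝ :=
  Matrix.det (Matrix.of fun i j => ω i (x j))

/-- `ω` is an `m`-dimensional positive Chebyshev system over `H`. -/
def IsPosChebyshev {m : ℕ} (ω : Fin m → ℝ → ℝ) (H : Set ℝ) : Prop :=
  ∀ x : Fin m → ℝ, (∀ i, x i ∈ H) → StrictMono x → 0 < Phi ω x

/-- `f` is convex with respect to the `m`-dimensional system `ω` on `S`. -/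
def IsConvexWRT {m : ℕ} (ω : Fin m → ℝ → ℝ) (S : Set ℝ) (f : ℝ → ℝ) : Prop :=
  ∀ x : Fin (m + 1) → ℝ, (∀ i, x i ∈ S) → StrictMono x → 0 ≤ Phi (Fin.snoc ω f) x

/-- The generalized divided difference `[x₁,…,x_k; f]_{ω⟨k⟩}`:
the numerator replaces the last function `ω_k` by `f`. -/
noncomputable def divDiff {k : ℕ} (ω : Fin k → ℝ → ℝ) (f : ℝ → ℝ) (x : Fin k → ℝ) : ℝ :=
  Phi (fun i => if (i : ℕ) + 1 = k then f else ω i) x / Phi ω x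

open Finset

lemma snoc_eval {M : ℕ} {α : Type*} (q : Fin M → α) (a : α) (i : Fin (M+1)) :
    (Fin.snoc q a : Fin (M+1) → α) i = if h : (i : ℕ) < M then q ⟨i, h⟩ else a := by
  induction i using Fin.lastCases with
  | last => simp
  | cast t => simp

noncomputable def invCount {N : ℕ} (z : Fin N → ℝ) : ℕ :=
  #(Finset.univ.filter fun p : Fin N × Fin N => p.1 < p.2 ∧ z p.2 < z p.1)

lemma swap_lt {N : ℕ} {a b i j : Fin N} (hab : (a:ℕ)+1 = b) (hij : i < j)
    (hne : ¬(i = a ∧ j = b)) : Equiv.swap a b i < Equiv.swap a b j := by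
  push_neg at hne
  simp only [Equiv.swap_apply_def]
  split_ifs <;>
    (simp only [Fin.lt_def, Fin.ext_iff, ← Fin.val_ne_iff] at * ; omega)

lemma phi_swap {N : ℕ} (v : Fin N → ℝ → ℝ) (z : Fin N → ℝ) (a b : Fin N) (hab : a ≠ b) :
    Phi v (z ∘ Equiv.swap a b) = - Phi v z := by
  have h : (Matrix.of fun i j => v i ((z ∘ Equiv.swap a b) j))
      = (Matrix.of fun i j => v i (z j)).submatrix id (Equiv.swap a b) := rfl
  rw [Phi, h, Matrix.det_permute', Equiv.Perm.sign_swap hab, Phi]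
  push_cast
  ring
lemma invCount_swap {N : ℕ} (z : Fin N → ℝ) (a b : Fin N) (hab : (a:ℕ)+1 = b)
    (hzab : z b < z a) : invCount (z ∘ Equiv.swap a b) + 1 = invCount z := by
  classical
  have hab' : a < b := by simp only [Fin.lt_def]; omega
  have habne : a ≠ b := ne_of_lt hab'
  set T : Finset (Fin N × Fin N) :=
    Finset.univ.filter (fun p : Fin N × Fin N => p.1 < p.2 ∧ z p.2 < z p.1) with hT
  set T' : Finset (Fin N × Fin N) :=
    Finset.univ.filter
      (fun p : Fin N × Fin N => p.1 < p.2 ∧ (z ∘ Equiv.swap a b) p.2 < (z ∘ Equiv.swap a b) p.1)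
      with hT'
  have hmem : (a, b) ∈ T := by simp [hT, hab', hzab]
  have hnmem : (a, b) ∉ T' := by
    simp [hT', hab', Equiv.swap_apply_left, Equiv.swap_apply_right, not_lt.2 hzab.le]
  have key : #(T'.erase (a,b)) = #(T.erase (a,b)) := by
    refine Finset.card_bij' (fun p _ => (Equiv.swap a b p.1, Equiv.swap a b p.2))
      (fun p _ => (Equiv.swap a b p.1, Equiv.swap a b p.2)) ?_ ?_ ?_ ?_
    · rintro ⟨p1, p2⟩ hp
      simp only [Finset.mem_erase, hT', Finset.mem_filter, Finset.mem_univ, true_and,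
        Function.comp_apply, Ne, Prod.mk.injEq, not_and] at hp
      obtain ⟨hpne, hplt, hpz⟩ := hp
      have hne2 : ¬(p1 = a ∧ p2 = b) := by
        rintro ⟨rfl, rfl⟩; exact (hpne rfl rfl).elim
      refine Finset.mem_erase.2 ⟨?_, ?_⟩
      · rintro h
        rw [Prod.mk.injEq] at h
        obtain ⟨h1, h2⟩ := h
        have e1 : p1 = b := by
          have := congrArg (Equiv.swap a b) h1
          simpa [Equiv.swap_apply_left] using this
        have e2 : p2 = a := by
          have := congrArg (Equiv.swap a b) h2
          simpa [Equiv.swap_apply_right] using this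
        subst e1; subst e2
        exact absurd hplt (not_lt.2 hab'.le)
      · exact Finset.mem_filter.2 ⟨Finset.mem_univ _, swap_lt hab hplt hne2, hpz⟩
    · rintro ⟨p1, p2⟩ hp
      simp only [Finset.mem_erase, hT, Finset.mem_filter, Finset.mem_univ, true_and,
        Ne, Prod.mk.injEq, not_and] at hp
      obtain ⟨hpne, hplt, hpz⟩ := hp
      have hne2 : ¬(p1 = a ∧ p2 = b) := by
        rintro ⟨rfl, rfl⟩; exact (hpne rfl rfl).elim
      refine Finset.mem_erase.2 ⟨?_, ?_⟩
      · rintro h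
        rw [Prod.mk.injEq] at h
        obtain ⟨h1, h2⟩ := h
        have e1 : p1 = b := by
          have := congrArg (Equiv.swap a b) h1
          simpa [Equiv.swap_apply_left] using this
        have e2 : p2 = a := by
          have := congrArg (Equiv.swap a b) h2
          simpa [Equiv.swap_apply_right] using this
        subst e1; subst e2
        exact absurd hplt (not_lt.2 hab'.le)
      · refine Finset.mem_filter.2 ⟨Finset.mem_univ _, swap_lt hab hplt hne2, ?_⟩
        simpa [Function.comp, Equiv.swap_apply_self] using hpz
    · rintro ⟨p1, p2⟩ _; simp [Equiv.swap_apply_self]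
    · rintro ⟨p1, p2⟩ _; simp [Equiv.swap_apply_self]
  have h1 : #(T.erase (a,b)) + 1 = #T := Finset.card_erase_add_one hmem
  have h2 : T'.erase (a,b) = T' := Finset.erase_eq_of_notMem hnmem
  rw [invCount, invCount, ← hT, ← hT', ← h1, ← key, h2]

lemma sort_phi_aux {N : ℕ} : ∀ (c : ℕ) (z : Fin N → ℝ), Function.Injective z → invCount z = c →
    ∃ σ : Equiv.Perm (Fin N), StrictMono (z ∘ σ) ∧
      ∀ v : Fin N → ℝ → ℝ, Phi v z = (-1 : ℝ) ^ c * Phi v (z ∘ σ) := by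
  intro c
  induction c using Nat.strong_induction_on with
  | _ c ih =>
    intro z hz hc
    by_cases hd : ∃ t : ℕ, ∃ h : t + 1 < N, z ⟨t+1, h⟩ < z ⟨t, by omega⟩
    · obtain ⟨t, h, hlt⟩ := hd
      set a : Fin N := ⟨t, by omega⟩ with ha
      set b : Fin N := ⟨t+1, h⟩ with hb
      have hab : (a:ℕ)+1 = b := rfl
      have hab' : a ≠ b := by simp [ha, hb, Fin.ext_iff]
      have hswap := invCount_swap z a b hab hlt
      subst hc
      have hlt' : invCount (z ∘ Equiv.swap a b) < invCount z := by omega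
      obtain ⟨σ', hσ'1, hσ'2⟩ := ih _ hlt' (z ∘ Equiv.swap a b)
        (hz.comp (Equiv.swap a b).injective) rfl
      refine ⟨σ'.trans (Equiv.swap a b), hσ'1, fun v => ?_⟩
      have e1 : Phi v z = - Phi v (z ∘ Equiv.swap a b) := by
        rw [phi_swap v z a b hab']; ring
      have e2 : (z ∘ ⇑(σ'.trans (Equiv.swap a b))) = (z ∘ Equiv.swap a b) ∘ σ' := rfl
      rw [e1, hσ'2 v, e2, ← hswap, pow_succ]
      ring
    · push_neg at hd
      have step : ∀ t (ht : t + 1 < N), z ⟨t, by omega⟩ ≤ z ⟨t+1, ht⟩ := by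
        intro t ht
        exact hd t ht
      have chain : ∀ d t (hh : t + d < N), z ⟨t, by omega⟩ ≤ z ⟨t + d, hh⟩ := by
        intro d
        induction d with
        | zero => intro t hh; simp
        | succ d ihd =>
          intro t hh
          have h1 : t + d < N := by omega
          calc z ⟨t, by omega⟩ ≤ z ⟨t + d, h1⟩ := ihd t h1
            _ ≤ z ⟨t + d + 1, by omega⟩ := step (t+d) (by omega)
      have hmono : Monotone z := by
        intro i j hij
        have hij' : (i:ℕ) ≤ j := hij
        have := chain ((j:ℕ) - i) i (by omega)
        have e : (⟨(i:ℕ) + ((j:ℕ) - (i:ℕ)), by omega⟩ : Fin N) = j := by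
          apply Fin.ext; simp; omega
        rw [e] at this
        simpa using this
      have hsm : StrictMono z := hmono.strictMono_of_injective hz
      have h0 : invCount z = 0 := by
        rw [invCount, Finset.card_eq_zero, Finset.filter_eq_empty_iff]
        rintro p -
        rintro ⟨h1, h2⟩
        exact absurd (hsm h1) (not_lt.2 h2.le)
      refine ⟨1, by simpa using hsm, fun v => ?_⟩
      rw [← hc, h0, pow_zero, one_mul]
      rfl

lemma sort_phi {N : ℕ} (z : Fin N → ℝ) (hz : Function.Injective z) :
    ∃ σ : Equiv.Perm (Fin N), StrictMono (z ∘ σ) ∧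
      ∀ v : Fin N → ℝ → ℝ, Phi v z = (-1 : ℝ) ^ invCount z * Phi v (z ∘ σ) :=
  sort_phi_aux (invCount z) z hz rfl

lemma invCount_merge {N k m : ℕ} (hN : N = k + m) (x : Fin k → ℝ) (y : Fin m → ℝ)
    (hx : StrictMono x) (hy : StrictMono y) :
    invCount (fun t : Fin N => if h : (t:ℕ) < k then x ⟨t, h⟩ else y ⟨(t:ℕ) - k, by omega⟩)
      = ∑ j : Fin m, #(Finset.univ.filter fun i => y j < x i) := by
  classical
  set z : Fin N → ℝ :=
    fun t => if h : (t:ℕ) < k then x ⟨t, h⟩ else y ⟨(t:ℕ) - k, by omega⟩ with hzdef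
  set s : Finset (Fin N × Fin N) :=
    Finset.univ.filter (fun p : Fin N × Fin N => p.1 < p.2 ∧ z p.2 < z p.1) with hs
  set t : Finset (Fin k × Fin m) :=
    Finset.univ.filter (fun r : Fin k × Fin m => y r.2 < x r.1) with ht
  have hz1 : ∀ (i : Fin N) (h : (i:ℕ) < k), z i = x ⟨i, h⟩ := by
    intro i h; simp [hzdef, dif_pos h]
  have hz2 : ∀ (i : Fin N) (h : ¬ (i:ℕ) < k), z i = y ⟨(i:ℕ) - k, by omega⟩ := by
    intro i h; simp [hzdef, dif_neg h]
  have split1 : ∀ p ∈ s, (p.1 : Fin N).1 < k := by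
    rintro ⟨p1, p2⟩ hp
    show (p1:ℕ) < k
    simp only [hs, Finset.mem_filter, Finset.mem_univ, true_and] at hp
    obtain ⟨hlt, hzlt⟩ := hp
    by_contra hge
    have hlt' : (p1:ℕ) < (p2:ℕ) := hlt
    have hge2 : ¬ (p2:ℕ) < k := by omega
    rw [hz2 p1 hge, hz2 p2 hge2] at hzlt
    have : ((⟨(p1:ℕ) - k, by omega⟩ : Fin m)) < ⟨(p2:ℕ) - k, by omega⟩ := by
      simp only [Fin.lt_def]; omega
    exact absurd (hy this) (not_lt.2 hzlt.le)
  have split2 : ∀ p ∈ s, k ≤ (p.2 : Fin N).1 := by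
    rintro ⟨p1, p2⟩ hp
    show k ≤ (p2:ℕ)
    simp only [hs, Finset.mem_filter, Finset.mem_univ, true_and] at hp
    obtain ⟨hlt, hzlt⟩ := hp
    by_contra hge
    push_neg at hge
    have hlt' : (p1:ℕ) < (p2:ℕ) := hlt
    have h1 : (p1:ℕ) < k := by omega
    rw [hz1 p1 h1, hz1 p2 hge] at hzlt
    have : ((⟨(p1:ℕ), h1⟩ : Fin k)) < ⟨(p2:ℕ), hge⟩ := by
      simp only [Fin.lt_def]; omega
    exact absurd (hx this) (not_lt.2 hzlt.le)
  have hcard : #s = #t := by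
    refine Finset.card_bij' (fun p hp => (⟨p.1.1, split1 p hp⟩,
        ⟨p.2.1 - k, by have := split2 p hp; have := p.2.isLt; omega⟩))
      (fun r _ => ((⟨r.1.1, by have := r.1.isLt; omega⟩ : Fin N),
        (⟨k + r.2.1, by have := r.2.isLt; omega⟩ : Fin N))) ?_ ?_ ?_ ?_
    · rintro ⟨p1, p2⟩ hp
      have h1 : (p1:ℕ) < k := split1 _ hp
      have h2 : k ≤ (p2:ℕ) := split2 _ hp
      simp only [hs, Finset.mem_filter, Finset.mem_univ, true_and] at hp
      obtain ⟨hlt, hzlt⟩ := hp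
      rw [hz1 p1 h1, hz2 p2 (by omega)] at hzlt
      simp only [ht, Finset.mem_filter, Finset.mem_univ, true_and]
      exact hzlt
    · rintro ⟨r1, r2⟩ hr
      simp only [ht, Finset.mem_filter, Finset.mem_univ, true_and] at hr
      simp only [hs, Finset.mem_filter, Finset.mem_univ, true_and]
      constructor
      · simp only [Fin.lt_def]; omega
      · have e1 : z ⟨(r1:ℕ), by omega⟩ = x r1 := by
          rw [hz1 ⟨(r1:ℕ), by omega⟩ (by exact r1.isLt)]
        have e2 : z ⟨k + (r2:ℕ), by omega⟩ = y r2 := by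
          rw [hz2 ⟨k + (r2:ℕ), by omega⟩ (by simp only [Fin.val_mk]; omega)]
          exact congrArg y (Fin.ext (by simp))
        rw [e1, e2]; exact hr
    · rintro ⟨p1, p2⟩ hp
      have h2 : k ≤ (p2:ℕ) := split2 _ hp
      simp only [Prod.mk.injEq, Fin.ext_iff, Fin.val_mk]
      exact ⟨by trivial, by omega⟩
    · rintro ⟨r1, r2⟩ _
      simp only [Prod.mk.injEq, Fin.ext_iff, Fin.val_mk]
      exact ⟨by trivial, by omega⟩
  rw [invCount, ← hs, hcard, ht]
  rw [Finset.card_eq_sum_card_fiberwise (f := fun r : Fin k × Fin m => r.2)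
    (t := Finset.univ) (fun r _ => Finset.mem_univ _)]
  refine Finset.sum_congr rfl fun j _ => ?_
  refine Finset.card_nbij' (fun r => r.1) (fun i => (i, j)) ?_ ?_ ?_ ?_ <;>
    simp +contextual [Finset.mem_filter]
  all_goals intro a b
  all_goals simp only [Finset.coe_filter, Finset.mem_univ, true_and, Set.mem_setOf_eq] at b ⊢
  · obtain ⟨h, rfl⟩ := b; exact h
  · simpa using b
  · obtain ⟨-, rfl⟩ := b; rfl

lemma merge_inj {N k m : ℕ} (hN : N = k + m) (x : Fin k → ℝ) (y : Fin m → ℝ)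
    (hx : StrictMono x) (hy : StrictMono y) (hdisj : ∀ j, y j ∉ Set.range x) :
    Function.Injective
      (fun t : Fin N => if h : (t:ℕ) < k then x ⟨t, h⟩ else y ⟨(t:ℕ) - k, by omega⟩) := by
  intro a b hab
  simp only at hab
  apply Fin.ext
  by_cases ha : (a:ℕ) < k <;> by_cases hb : (b:ℕ) < k
  · rw [dif_pos ha, dif_pos hb] at hab
    have := hx.injective hab
    simpa [Fin.ext_iff] using this
  · rw [dif_pos ha, dif_neg hb] at hab
    exact absurd ⟨_, hab⟩ (hdisj _)
  · rw [dif_neg ha, dif_pos hb] at hab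
    exact absurd ⟨_, hab.symm⟩ (hdisj _)
  · rw [dif_neg ha, dif_neg hb] at hab
    have := hy.injective hab
    simp only [Fin.ext_iff] at this
    omega

lemma fin1_strictMono (w : Fin 1 → ℝ) : StrictMono w := by
  intro a b h
  exact absurd h (by omega)


/-- Theorem 2, (i) ⇒ (ii): if `f` is `ω`-convex on `H`, then for each `x₁ < … < x_k` in `H`
the function `x ↦ [x₁,…,x_k,x; f]_{ω⟨k+1⟩}` is convex on `H \ {x₁,…,x_k}` with respect to the
`(n-k)`-dimensional Chebyshev system `x ↦ [x₁,…,x_k,x; ω_j]_{ω⟨k+1⟩}`, `j ∈ {k+1,…,n}`. -/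
theorem omega_convex_implies_divided_difference_convex (n k : ℕ) (hk : k < n) (H : Set ℝ)
    (hH : n + 1 ≤ H.ncard ∨ H.Infinite)
    (ω : Fin n → ℝ → ℝ) (f : ℝ → ℝ)
    (hω : IsPosChebyshev ω H)
    (hωk : IsPosChebyshev (fun i : Fin k => ω (Fin.castLE (by omega) i)) H)
    (hωk1 : IsPosChebyshev (fun i : Fin (k + 1) => ω (Fin.castLE hk i)) H)
    (hf : IsConvexWRT ω H f)
    (x : Fin k → ℝ) (hxH : ∀ i, x i ∈ H) (hx : StrictMono x) :
    IsConvexWRT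
      (fun j : Fin (n - k) => fun y : ℝ =>
        divDiff (fun i : Fin (k + 1) => ω (Fin.castLE hk i))
          (ω ⟨k + (j : ℕ), by have := j.isLt; omega⟩) (Fin.snoc x y))
      (H \ Set.range x)
      (fun y : ℝ =>
        divDiff (fun i : Fin (k + 1) => ω (Fin.castLE hk i)) f (Fin.snoc x y)) := by
  classical
  intro y hyH hy
  have hknk : k ≤ n := hk.le
  have hyH' : ∀ j, y j ∈ H := fun j => (hyH j).1
  have hynx : ∀ j, y j ∉ Set.range x := fun j => (hyH j).2
  -- the auxiliary row functions
  set g : Fin (n - k + 1) → ℝ → ℝ :=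
    Fin.snoc (fun t : Fin (n - k) => ω ⟨k + (t : ℕ), by have := t.isLt; omega⟩) f with hgdef
  -- block matrices
  set P : Matrix (Fin k) (Fin k) ℝ :=
    Matrix.of fun i j => ω (Fin.castLE hknk i) (x j) with hPdef
  set Q : Matrix (Fin k) (Fin (n - k + 1)) ℝ :=
    Matrix.of fun i j => ω (Fin.castLE hknk i) (y j) with hQdef
  set R : Matrix (Fin (n - k + 1)) (Fin k) ℝ :=
    Matrix.of fun i j => g i (x j) with hRdef
  set S : Matrix (Fin (n - k + 1)) (Fin (n - k + 1)) ℝ :=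
    Matrix.of fun i j => g i (y j) with hSdef
  have hPdet : (0:ℝ) < P.det := hωk x hxH hx
  haveI : Invertible P := P.invertibleOfIsUnitDet (isUnit_iff_ne_zero.2 hPdet.ne')
  set T : Matrix (Fin (n - k + 1)) (Fin (n - k + 1)) ℝ := S - R * ⅟P * Q with hTdef
  -- numerators and denominators
  set Num : Fin (n - k + 1) → Fin (n - k + 1) → ℝ := fun i j =>
    Phi (fun i' : Fin (k + 1) =>
      if (i' : ℕ) + 1 = k + 1 then g i else ω (Fin.castLE hk i')) (Fin.snoc x (y j)) with hNumdef
  set Den : Fin (n - k + 1) → ℝ := fun j =>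
    Phi (fun i' : Fin (k + 1) => ω (Fin.castLE hk i')) (Fin.snoc x (y j)) with hDendef
  -- the key block identities
  have hNum : ∀ i j, Num i j = P.det * T i j := by
    intro i j
    have hM : (Matrix.of fun a b : Fin (k + 1) =>
        (if (a : ℕ) + 1 = k + 1 then g i else ω (Fin.castLE hk a)) ((Fin.snoc x (y j) : Fin (k+1) → ℝ) b))
        = (Matrix.fromBlocks P (Matrix.of fun a (_ : Fin 1) => Q a j)
            (Matrix.of fun (_ : Fin 1) b => R i b)
            (Matrix.of fun (_ : Fin 1) (_ : Fin 1) => S i j)).submatrix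
            finSumFinEquiv.symm finSumFinEquiv.symm := by
      have ea1 : ∀ t : Fin k, finSumFinEquiv.symm (Fin.castSucc t) = (Sum.inl t : Fin k ⊕ Fin 1) := by
        intro t
        rw [Equiv.symm_apply_eq, finSumFinEquiv_apply_left]
        rfl
      have ea2 : finSumFinEquiv.symm (Fin.last k) = (Sum.inr 0 : Fin k ⊕ Fin 1) := by
        rw [Equiv.symm_apply_eq, finSumFinEquiv_apply_right]
        rfl
      ext a b
      induction a using Fin.lastCases with
      | last =>
        induction b using Fin.lastCases with
        | last => simp [ea2, Fin.snoc_last, hSdef]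
        | cast b => simp [ea1, ea2, Fin.snoc_castSucc, hRdef]
      | cast t =>
        have hcond : ¬((t:ℕ) + 1 = k + 1) := by have := t.isLt; omega
        have hcond' : ¬((t:ℕ) = k) := by have := t.isLt; omega
        induction b using Fin.lastCases with
        | last => simp [ea1, ea2, Fin.snoc_last, hQdef, hcond, hcond']
        | cast b => simp [ea1, Fin.snoc_castSucc, hPdef, hcond, hcond']
    have hdet := congrArg Matrix.det hM
    rw [Matrix.det_submatrix_equiv_self, Matrix.det_fromBlocks₁₁] at hdet
    rw [hNumdef]
    simp only [Phi]
    rw [hdet, Matrix.det_fin_one]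
    congr 1
  -- the merged tuple
  set zz : Fin (n + 1) → ℝ :=
    fun t => if h : (t:ℕ) < k then x ⟨t, h⟩ else y ⟨(t:ℕ) - k, by omega⟩ with hzzdef
  have hbig : Phi (Fin.snoc ω f) zz = P.det * T.det := by
    have hM2 : (Matrix.of fun a b : Fin (n + 1) =>
        (Fin.snoc ω f : Fin (n+1) → ℝ → ℝ) a (zz b))
        = (Matrix.fromBlocks P Q R S).submatrix
            ((finCongr (by omega : n + 1 = k + (n - k + 1))).trans finSumFinEquiv.symm)
            ((finCongr (by omega : n + 1 = k + (n - k + 1))).trans finSumFinEquiv.symm) := by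
      have eb1 : ∀ (a : Fin (n + 1)) (h : (a:ℕ) < k),
          ((finCongr (by omega : n + 1 = k + (n - k + 1))).trans finSumFinEquiv.symm) a
            = (Sum.inl ⟨(a:ℕ), h⟩ : Fin k ⊕ Fin (n - k + 1)) := by
        intro a h
        rw [Equiv.trans_apply, Equiv.symm_apply_eq, finSumFinEquiv_apply_left]
        apply Fin.ext
        simp
      have eb2 : ∀ (a : Fin (n + 1)) (h : k ≤ (a:ℕ)),
          ((finCongr (by omega : n + 1 = k + (n - k + 1))).trans finSumFinEquiv.symm) a
            = (Sum.inr ⟨(a:ℕ) - k, by omega⟩ : Fin k ⊕ Fin (n - k + 1)) := by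
        intro a h
        rw [Equiv.trans_apply, Equiv.symm_apply_eq, finSumFinEquiv_apply_right]
        apply Fin.ext
        simp only [finCongr_apply, Fin.coe_cast, Fin.coe_natAdd, Fin.val_mk]
        omega
      have hzb1 : ∀ (b : Fin (n+1)) (h : (b:ℕ) < k), zz b = x ⟨b, h⟩ := by
        intro b h; simp only [hzzdef]; rw [dif_pos h]
      have hzb2 : ∀ (b : Fin (n+1)) (h : k ≤ (b:ℕ)), zz b = y ⟨(b:ℕ) - k, by omega⟩ := by
        intro b h; simp only [hzzdef]; rw [dif_neg (by omega)]
      have hrow1 : ∀ (a : Fin (n+1)) (h : (a:ℕ) < k),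
          (Fin.snoc ω f : Fin (n+1) → ℝ → ℝ) a = ω (Fin.castLE hknk ⟨(a:ℕ), h⟩) := by
        intro a h; rw [snoc_eval, dif_pos (by omega : (a:ℕ) < n)]
        exact congrArg ω (Fin.ext rfl)
      have hrow2 : ∀ (a : Fin (n+1)) (h : k ≤ (a:ℕ)),
          (Fin.snoc ω f : Fin (n+1) → ℝ → ℝ) a = g ⟨(a:ℕ) - k, by omega⟩ := by
        intro a h
        rw [snoc_eval, hgdef, snoc_eval]
        by_cases han : (a:ℕ) < n
        · rw [dif_pos han, dif_pos (show ((⟨(a:ℕ)-k, by omega⟩ : Fin (n-k+1)) : ℕ) < n - k by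
            simp only [Fin.val_mk]; omega)]
          exact congrArg ω (Fin.ext (by simp only [Fin.val_mk]; omega))
        · rw [dif_neg han, dif_neg (show ¬(((⟨(a:ℕ)-k, by omega⟩ : Fin (n-k+1)) : ℕ) < n - k) by
            simp only [Fin.val_mk]; omega)]
      ext a b
      simp only [Matrix.of_apply, Matrix.submatrix_apply]
      rcases lt_or_ge (a:ℕ) k with hak | hak <;> rcases lt_or_ge (b:ℕ) k with hbk | hbk
      · rw [hrow1 a hak, hzb1 b hbk, eb1 a hak, eb1 b hbk, Matrix.fromBlocks_apply₁₁]
        rfl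
      · rw [hrow1 a hak, hzb2 b hbk, eb1 a hak, eb2 b hbk, Matrix.fromBlocks_apply₁₂]
        rfl
      · rw [hrow2 a hak, hzb1 b hbk, eb2 a hak, eb1 b hbk, Matrix.fromBlocks_apply₂₁]
        rfl
      · rw [hrow2 a hak, hzb2 b hbk, eb2 a hak, eb2 b hbk, Matrix.fromBlocks_apply₂₂]
        rfl
    rw [Phi, hM2, Matrix.det_submatrix_equiv_self, Matrix.det_fromBlocks₁₁]
  -- counting
  set c : Fin (n - k + 1) → ℕ := fun j => #(Finset.univ.filter fun i : Fin k => y j < x i)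
    with hcdef
  have hsnoc_eq : ∀ j, (Fin.snoc x (y j) : Fin (k+1) → ℝ)
      = (fun t : Fin (k+1) => if h : (t:ℕ) < k then x ⟨t, h⟩
          else (fun _ : Fin 1 => y j) ⟨(t:ℕ) - k, by omega⟩) := by
    intro j; funext t; rw [snoc_eval]
  have hsnocinj : ∀ j, Function.Injective (Fin.snoc x (y j) : Fin (k+1) → ℝ) := by
    intro j; rw [hsnoc_eq j]
    exact merge_inj rfl x _ hx (fin1_strictMono _) (fun _ => hynx j)
  have hglast : g (Fin.last (n - k)) = f := by rw [hgdef]; simp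
  have hinvsnoc : ∀ j, invCount (Fin.snoc x (y j) : Fin (k+1) → ℝ) = c j := by
    intro j; rw [hsnoc_eq j]
    exact (invCount_merge rfl x (fun _ : Fin 1 => y j) hx (fin1_strictMono _)).trans
      (by simp [hcdef])
  have hmemsnoc : ∀ j t, (Fin.snoc x (y j) : Fin (k+1) → ℝ) t ∈ H := by
    intro j t; rw [snoc_eval]
    split_ifs with h
    · exact hxH _
    · exact hyH' j
  have hDenval : ∀ j, ∃ d : ℝ, 0 < d ∧ Den j = (-1:ℝ)^(c j) * d := by
    intro j
    obtain ⟨σ, hσ1, hσ2⟩ := sort_phi (Fin.snoc x (y j)) (hsnocinj j)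
    refine ⟨Phi (fun i' : Fin (k + 1) => ω (Fin.castLE hk i')) (Fin.snoc x (y j) ∘ σ),
      hωk1 _ (fun t => hmemsnoc j _) hσ1, ?_⟩
    rw [hDendef]
    simp only
    rw [hσ2, hinvsnoc j]
  choose d hd0 hdEq using hDenval
  -- sorting the merged tuple
  have hzzinj : Function.Injective zz := by
    rw [hzzdef]
    exact merge_inj (by omega) x y hx hy hynx
  have hmemzz : ∀ t, zz t ∈ H := by
    intro t
    rw [hzzdef]
    simp only
    split_ifs with h
    · exact hxH _
    · exact hyH' _
  obtain ⟨σ, hσ1, hσ2⟩ := sort_phi zz hzzinj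
  have hB : 0 ≤ Phi (Fin.snoc ω f) (zz ∘ σ) := hf _ (fun t => hmemzz _) hσ1
  have hinvzz : invCount zz = ∑ j, c j := by
    rw [hzzdef]
    exact (invCount_merge (by omega) x y hx hy).trans (by simp [hcdef])
  have hPhiz : Phi (Fin.snoc ω f) zz
      = (-1:ℝ)^(∑ j, c j) * Phi (Fin.snoc ω f) (zz ∘ σ) := by
    rw [hσ2, hinvzz]
  -- express the goal determinant
  have hmat : (Matrix.of fun i j : Fin (n - k + 1) =>
      (Fin.snoc (fun j : Fin (n - k) => fun y : ℝ =>
        divDiff (fun i : Fin (k + 1) => ω (Fin.castLE hk i))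
          (ω ⟨k + (j : ℕ), by have := j.isLt; omega⟩) (Fin.snoc x y))
        (fun y : ℝ =>
          divDiff (fun i : Fin (k + 1) => ω (Fin.castLE hk i)) f (Fin.snoc x y))
        : Fin (n - k + 1) → ℝ → ℝ) i (y j))
      = Matrix.of fun i j => (Den j)⁻¹ * Num i j := by
    ext i j
    simp only [Matrix.of_apply, hNumdef, hDendef]
    induction i using Fin.lastCases with
    | last =>
      rw [Fin.snoc_last, hglast]
      simp only [divDiff, div_eq_inv_mul]
    | cast t =>
      rw [Fin.snoc_castSucc]
      have hgt : g (Fin.castSucc t) = ω ⟨k + (t : ℕ), by have := t.isLt; omega⟩ := by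
        rw [hgdef]; simp
      rw [hgt]
      simp only [divDiff, div_eq_inv_mul]
  have hgoal : Phi (Fin.snoc (fun j : Fin (n - k) => fun y : ℝ =>
        divDiff (fun i : Fin (k + 1) => ω (Fin.castLE hk i))
          (ω ⟨k + (j : ℕ), by have := j.isLt; omega⟩) (Fin.snoc x y))
        (fun y : ℝ =>
          divDiff (fun i : Fin (k + 1) => ω (Fin.castLE hk i)) f (Fin.snoc x y))) y
      = (∏ j, (Den j)⁻¹) * Matrix.det (Matrix.of fun i j => Num i j) := by
    rw [Phi, hmat]
    exact Matrix.det_mul_row (fun j => (Den j)⁻¹) (Matrix.of fun i j => Num i j)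
  rw [hgoal]
  -- compute the determinant of the numerator matrix
  have hNumMat : (Matrix.of fun i j => Num i j) = P.det • T := by
    ext i j
    rw [Matrix.of_apply, hNum i j]
    rfl
  have hdetNum : Matrix.det (Matrix.of fun i j => Num i j)
      = P.det ^ (n - k) * (P.det * T.det) := by
    rw [hNumMat, Matrix.det_smul]
    simp only [Fintype.card_fin, smul_eq_mul]
    rw [pow_succ]
    ring
  rw [hdetNum, ← hbig, hPhiz]
  -- final sign bookkeeping
  have hprodDen : (∏ j, (Den j)⁻¹)
      = ((-1:ℝ)^(∑ j, c j) * ∏ j, d j)⁻¹ := by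
    rw [Finset.prod_inv_distrib]
    congr 1
    calc (∏ j, Den j) = ∏ j, ((-1:ℝ)^(c j) * d j) := Finset.prod_congr rfl fun j _ => hdEq j
      _ = (∏ j, (-1:ℝ)^(c j)) * ∏ j, d j := Finset.prod_mul_distrib
      _ = (-1:ℝ)^(∑ j, c j) * ∏ j, d j := by rw [Finset.prod_pow_eq_pow_sum]
  rw [hprodDen]
  have hE : ((-1:ℝ)^(∑ j, c j)) ≠ 0 := pow_ne_zero _ (by norm_num)
  have hdprod : (0:ℝ) < ∏ j, d j := Finset.prod_pos fun j _ => hd0 j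
  have halg : (((-1:ℝ)^(∑ j, c j) * ∏ j, d j)⁻¹ *
      (P.det ^ (n - k) * ((-1:ℝ)^(∑ j, c j) * Phi (Fin.snoc ω f) (zz ∘ σ))))
      = (((-1:ℝ)^(∑ j, c j))⁻¹ * ((-1:ℝ)^(∑ j, c j))) *
        ((∏ j, d j)⁻¹ * (P.det ^ (n - k) * Phi (Fin.snoc ω f) (zz ∘ σ))) := by
    ring
  rw [halg, inv_mul_cancel₀ hE, one_mul]
  have : 0 ≤ (∏ j, d j)⁻¹ := inv_nonneg.2 hdprod.le
  exact mul_nonneg this (mul_nonneg (pow_nonneg hPdet.le _) hB)
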